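/- (Average-iterate CE for non-stationary multi-player general-sum matrix games, Appendix D.3.) Let m, T be positive integers, A_1,…,A_m finite nonempty action sets, and for each t ∈ {1,…,T} and player i let r_i^t : A_1 × ⋯ × A_m → [0,1] be reward functions. Let π^t = π_1^t ⊗ ⋯ ⊗ π_m^t be product distributions with π_i^t ∈ Δ(A_i), and Δ, ρ_1,…,ρ_m ≥ 0. Suppose Σ_{t=1}^{T−1} max_{i} max_{a} |r_i^{t+1}(a) − r_i^t(a)| ≤ Δ, and for each player i, max_{φ : A_i → A_i} (1/T) Σ_{t=1}^T E_{a ∼ π^t}[ r_i^t(φ(a_i), a_{-i}) ] − (1/T) Σ_{t=1}^T E_{a ∼ π^t}[ r_i^t(a) ] ≤ ρ_i. Then the averaged joint distribution π̄ = (1/T) Σ_{t=1}^T π^t satisfies, for every player i, max_{φ : A_i → A_i} E_{a ∼ π̄}[ r_i^T(φ(a_i), a_{-i}) ] − E_{a ∼ π̄}[ r_i^T(a) ] ≤ ρ_i + 2Δ. -/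
import Mathlib


open Finset

set_option maxHeartbeats 1600000 in
/-- (Average-iterate CE for non-stationary multi-player general-sum matrix games,
Appendix D.3.) If each player i runs a no-swap-regret algorithm producing product
distributions π^t = ⊗_i π_i^t for the non-stationary rewards r^t with total variation at
most Δ, then the averaged joint distribution π̄ = (1/T)Σ_t π^t has CE gap (over strategy
modifications φ : A_i → A_i) at most ρ_i + 2Δ for each player i in the final game r^T. -/
theorem stmt_7 (m T : ℕ) (hm : 0 < m) (hT : 0 < T)
    (A : Fin m → Type*) [∀ i, Fintype (A i)] [∀ i, Nonempty (A i)] [∀ i, DecidableEq (A i)]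
    (r : ℕ → (i : Fin m) → ((j : Fin m) → A j) → ℝ)
    (hr : ∀ t ∈ Finset.Icc 1 T, ∀ i a, r t i a ∈ Set.Icc (0 : ℝ) 1)
    (π : ℕ → (i : Fin m) → A i → ℝ)
    (hπ0 : ∀ t ∈ Finset.Icc 1 T, ∀ i a, 0 ≤ π t i a)
    (hπ1 : ∀ t ∈ Finset.Icc 1 T, ∀ i, ∑ a, π t i a = 1)
    (Δ : ℝ) (hΔ : 0 ≤ Δ) (ρ : Fin m → ℝ) (hρ : ∀ i, 0 ≤ ρ i)
    (hvar : ∑ t ∈ Finset.Icc 1 (T - 1),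
        (Finset.univ : Finset (Fin m × ((j : Fin m) → A j))).sup'
          (by have : Nonempty (Fin m) := ⟨⟨0, hm⟩⟩
              exact Finset.univ_nonempty)
          (fun p => |r (t + 1) p.1 p.2 - r t p.1 p.2|) ≤ Δ)
    (hreg : ∀ i,
        (Finset.univ : Finset (A i → A i)).sup' Finset.univ_nonempty (fun φ =>
          (1 / (T : ℝ)) * ∑ t ∈ Finset.Icc 1 T, ∑ a : (j : Fin m) → A j,
            (∏ j, π t j (a j)) * r t i (Function.update a i (φ (a i))))
        - (1 / (T : ℝ)) * ∑ t ∈ Finset.Icc 1 T, ∑ a : (j : Fin m) → A j,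
            (∏ j, π t j (a j)) * r t i a ≤ ρ i) :
    ∀ i,
      (Finset.univ : Finset (A i → A i)).sup' Finset.univ_nonempty (fun φ =>
        ∑ a : (j : Fin m) → A j,
          ((1 / (T : ℝ)) * ∑ t ∈ Finset.Icc 1 T, ∏ j, π t j (a j))
            * r T i (Function.update a i (φ (a i))))
      - ∑ a : (j : Fin m) → A j,
          ((1 / (T : ℝ)) * ∑ t ∈ Finset.Icc 1 T, ∏ j, π t j (a j)) * r T i a
      ≤ ρ i + 2 * Δ := by
  intro i
  rw [sub_le_iff_le_add]
  apply Finset.sup'_le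
  intro φ _
  have hne : Nonempty (Fin m) := ⟨⟨0, hm⟩⟩
  -- g s : maximal change from step s to s+1
  set g : ℕ → ℝ := fun s =>
    (Finset.univ : Finset (Fin m × ((j : Fin m) → A j))).sup'
      Finset.univ_nonempty (fun p => |r (s + 1) p.1 p.2 - r s p.1 p.2|) with hg
  have hgnn : ∀ s, 0 ≤ g s := by
    intro s
    obtain ⟨p⟩ := (inferInstance : Nonempty (Fin m × ((j : Fin m) → A j)))
    simp only [hg]
    exact le_trans (abs_nonneg (r (s + 1) p.1 p.2 - r s p.1 p.2))
      (Finset.le_sup' (fun p : Fin m × ((j : Fin m) → A j) =>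
        |r (s + 1) p.1 p.2 - r s p.1 p.2|) (Finset.mem_univ p))
  have hbound : ∀ t ∈ Finset.Icc 1 T, ∀ (i' : Fin m) (a : (j : Fin m) → A j),
      |r T i' a - r t i' a| ≤ Δ := by
    intro t ht i' a
    rw [Finset.mem_Icc] at ht
    have htel : r T i' a - r t i' a
        = ∑ s ∈ Finset.Ico t T, (r (s + 1) i' a - r s i' a) := by
      rw [Finset.sum_Ico_eq_sub _ ht.2, Finset.sum_range_sub (fun k => r k i' a) T,
        Finset.sum_range_sub (fun k => r k i' a) t]
      ring
    rw [htel]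
    calc |∑ s ∈ Finset.Ico t T, (r (s + 1) i' a - r s i' a)|
        ≤ ∑ s ∈ Finset.Ico t T, |r (s + 1) i' a - r s i' a| :=
          Finset.abs_sum_le_sum_abs _ _
      _ ≤ ∑ s ∈ Finset.Ico t T, g s := by
          apply Finset.sum_le_sum
          intro s _
          simp only [hg]
          exact Finset.le_sup' (fun p : Fin m × ((j : Fin m) → A j) =>
            |r (s + 1) p.1 p.2 - r s p.1 p.2|) (Finset.mem_univ (i', a))
      _ ≤ ∑ s ∈ Finset.Icc 1 (T - 1), g s := by
          apply Finset.sum_le_sum_of_subset_of_nonneg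
          · intro s hs
            rw [Finset.mem_Ico] at hs
            rw [Finset.mem_Icc]
            omega
          · intro s _ _
            exact hgnn s
      _ ≤ Δ := hvar
  have hwnn : ∀ t ∈ Finset.Icc 1 T, ∀ a : (j : Fin m) → A j,
      0 ≤ ∏ j, π t j (a j) :=
    fun t ht a => Finset.prod_nonneg fun j _ => hπ0 t ht j (a j)
  have hwsum : ∀ t ∈ Finset.Icc 1 T, ∑ a : (j : Fin m) → A j, ∏ j, π t j (a j) = 1 := by
    intro t ht
    rw [← Fintype.piFinset_univ, ← Finset.prod_univ_sum]
    simp [hπ1 t ht]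
  -- expectation comparison
  have hcomp : ∀ t ∈ Finset.Icc 1 T, ∀ f f' : ((j : Fin m) → A j) → ℝ,
      (∀ a, f a ≤ f' a + Δ) →
      ∑ a : (j : Fin m) → A j, (∏ j, π t j (a j)) * f a
        ≤ (∑ a : (j : Fin m) → A j, (∏ j, π t j (a j)) * f' a) + Δ := by
    intro t ht f f' h
    calc ∑ a : (j : Fin m) → A j, (∏ j, π t j (a j)) * f a
        ≤ ∑ a : (j : Fin m) → A j, (∏ j, π t j (a j)) * (f' a + Δ) :=
          Finset.sum_le_sum fun a _ =>
            mul_le_mul_of_nonneg_left (h a) (hwnn t ht a)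
      _ = (∑ a : (j : Fin m) → A j, (∏ j, π t j (a j)) * f' a)
            + (∑ a : (j : Fin m) → A j, ∏ j, π t j (a j)) * Δ := by
          simp [mul_add, Finset.sum_add_distrib, Finset.sum_mul]
      _ = _ := by rw [hwsum t ht, one_mul]
  -- rewrite averaged expectation
  have rewr : ∀ F : ((j : Fin m) → A j) → ℝ,
      ∑ a : (j : Fin m) → A j,
          ((1 / (T : ℝ)) * ∑ t ∈ Finset.Icc 1 T, ∏ j, π t j (a j)) * F a
        = (1 / (T : ℝ)) * ∑ t ∈ Finset.Icc 1 T,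
            ∑ a : (j : Fin m) → A j, (∏ j, π t j (a j)) * F a := by
    intro F
    simp_rw [mul_assoc, ← Finset.mul_sum, Finset.sum_mul]
    rw [Finset.sum_comm]
  have hTpos : (0 : ℝ) < T := by exact_mod_cast hT
  have hcard : (Finset.Icc 1 T).card = T := by rw [Nat.card_Icc]; omega
  have hconst : (1 / (T : ℝ)) * (∑ _t ∈ Finset.Icc 1 T, Δ) = Δ := by
    rw [Finset.sum_const, hcard, nsmul_eq_mul]
    field_simp
  have havg : ∀ F F' : ℕ → ((j : Fin m) → A j) → ℝ,
      (∀ t ∈ Finset.Icc 1 T,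
        ∑ a : (j : Fin m) → A j, (∏ j, π t j (a j)) * F t a
          ≤ (∑ a : (j : Fin m) → A j, (∏ j, π t j (a j)) * F' t a) + Δ) →
      (1 / (T : ℝ)) * ∑ t ∈ Finset.Icc 1 T,
          ∑ a : (j : Fin m) → A j, (∏ j, π t j (a j)) * F t a
        ≤ (1 / (T : ℝ)) * (∑ t ∈ Finset.Icc 1 T,
            ∑ a : (j : Fin m) → A j, (∏ j, π t j (a j)) * F' t a) + Δ := by
    intro F F' h
    have h1 : (1 / (T : ℝ)) * ∑ t ∈ Finset.Icc 1 T,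
          ∑ a : (j : Fin m) → A j, (∏ j, π t j (a j)) * F t a
        ≤ (1 / (T : ℝ)) * ∑ t ∈ Finset.Icc 1 T,
          ((∑ a : (j : Fin m) → A j, (∏ j, π t j (a j)) * F' t a) + Δ) := by
      apply mul_le_mul_of_nonneg_left (Finset.sum_le_sum h) (by positivity)
    rw [Finset.sum_add_distrib, mul_add, hconst] at h1
    exact h1
  rw [rewr (fun a => r T i (Function.update a i (φ (a i)))), rewr (fun a => r T i a)]
  have step1 :
      (1 / (T : ℝ)) * ∑ t ∈ Finset.Icc 1 T, ∑ a : (j : Fin m) → A j,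
          (∏ j, π t j (a j)) * r T i (Function.update a i (φ (a i)))
        ≤ (1 / (T : ℝ)) * (∑ t ∈ Finset.Icc 1 T, ∑ a : (j : Fin m) → A j,
            (∏ j, π t j (a j)) * r t i (Function.update a i (φ (a i)))) + Δ := by
    apply havg (fun _ a => r T i (Function.update a i (φ (a i))))
      (fun t a => r t i (Function.update a i (φ (a i))))
    intro t ht
    apply hcomp t ht
    intro a
    have := abs_le.mp (hbound t ht i (Function.update a i (φ (a i))))
    linarith [this.2]
  have step3 :
      (1 / (T : ℝ)) * ∑ t ∈ Finset.Icc 1 T, ∑ a : (j : Fin m) → A j,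
          (∏ j, π t j (a j)) * r t i a
        ≤ (1 / (T : ℝ)) * (∑ t ∈ Finset.Icc 1 T, ∑ a : (j : Fin m) → A j,
            (∏ j, π t j (a j)) * r T i a) + Δ := by
    apply havg (fun t a => r t i a) (fun _ a => r T i a)
    intro t ht
    apply hcomp t ht
    intro a
    have := abs_le.mp (hbound t ht i a)
    linarith [this.1]
  have step2 :
      (1 / (T : ℝ)) * ∑ t ∈ Finset.Icc 1 T, ∑ a : (j : Fin m) → A j,
          (∏ j, π t j (a j)) * r t i (Function.update a i (φ (a i)))
        ≤ ρ i + (1 / (T : ℝ)) * ∑ t ∈ Finset.Icc 1 T, ∑ a : (j : Fin m) → A j,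
            (∏ j, π t j (a j)) * r t i a := by
    have hle := Finset.le_sup' (f := fun φ : A i → A i =>
        (1 / (T : ℝ)) * ∑ t ∈ Finset.Icc 1 T, ∑ a : (j : Fin m) → A j,
          (∏ j, π t j (a j)) * r t i (Function.update a i (φ (a i))))
      (Finset.mem_univ φ)
    have := hreg i
    linarith
  linarith
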